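/- Let F : A → Set(ℝ^n) be a multivalued map on A ⊆ ℝ^n satisfying the strict acute angle condition: ⟪x, y⟫ > 0 for all x ∈ A and y ∈ F(x). If A is a radian ε-net for some 0 < ε < π/2 and additionally angle(x, y) < π/2 − ε for all x ∈ A, y ∈ F(x), then F satisfies the strict coacute angle condition: for every nonzero v ∈ ℝ^n there exists x ∈ A with ⟪y, v⟫ > 0 for all y ∈ F(x). -/
import Mathlib


open Real InnerProductGeometry
open scoped InnerProductSpace

private lemma aux_angle_sum {n : ℕ} (a b c : EuclideanSpace ℝ (Fin n))
    (ha : ‖a‖ = 1) (hb : ‖b‖ = 1) (hc : ‖c‖ = 1)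
    (h : angle a b + angle b c < π / 2) : 0 < ⟪a, c⟫_ℝ := by
  set p : ℝ := ⟪a, b⟫_ℝ with hp
  set q : ℝ := ⟪b, c⟫_ℝ with hq
  have hbb : ⟪b, b⟫_ℝ = 1 := by
    rw [real_inner_self_eq_norm_mul_norm, hb]; ring
  have haa : ⟪a, a⟫_ℝ = 1 := by
    rw [real_inner_self_eq_norm_mul_norm, ha]; ring
  have hcc : ⟪c, c⟫_ℝ = 1 := by
    rw [real_inner_self_eq_norm_mul_norm, hc]; ring
  have hcos1 : Real.cos (angle a b) = p := by
    rw [cos_angle, ha, hb]; simp [hp]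
  have hcos2 : Real.cos (angle b c) = q := by
    rw [cos_angle, hb, hc]; simp [hq]
  have hsin1 : Real.sin (angle a b) = Real.sqrt (1 - p * p) := by
    have := sin_angle_mul_norm_mul_norm a b
    rw [ha, hb, haa, hbb] at this
    simpa using this
  have hsin2 : Real.sin (angle b c) = Real.sqrt (1 - q * q) := by
    have := sin_angle_mul_norm_mul_norm b c
    rw [hb, hc, hbb, hcc] at this
    simpa using this
  set a' : EuclideanSpace ℝ (Fin n) := a - p • b with ha'
  set c' : EuclideanSpace ℝ (Fin n) := c - q • b with hc'
  have hdecomp : ⟪a, c⟫_ℝ = p * q + ⟪a', c'⟫_ℝ := by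
    simp only [ha', hc', inner_sub_left, inner_sub_right, real_inner_smul_left,
      real_inner_smul_right, hbb]
    rw [← hp, ← hq]
    ring
  have hna' : ‖a'‖ = Real.sqrt (1 - p * p) := by
    have : ‖a'‖ ^ 2 = 1 - p * p := by
      rw [← real_inner_self_eq_norm_sq]
      simp only [ha', inner_sub_left, inner_sub_right, real_inner_smul_left,
        real_inner_smul_right, hbb, haa]
      rw [real_inner_comm a b, ← hp]
      ring
    rw [← this, Real.sqrt_sq (norm_nonneg _)]
  have hnc' : ‖c'‖ = Real.sqrt (1 - q * q) := by
    have : ‖c'‖ ^ 2 = 1 - q * q := by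
      rw [← real_inner_self_eq_norm_sq]
      simp only [hc', inner_sub_left, inner_sub_right, real_inner_smul_left,
        real_inner_smul_right, hbb, hcc]
      rw [real_inner_comm b c, ← hq]
      ring
    rw [← this, Real.sqrt_sq (norm_nonneg _)]
  have hCS : -(‖a'‖ * ‖c'‖) ≤ ⟪a', c'⟫_ℝ := by
    have := abs_real_inner_le_norm a' c'
    linarith [neg_abs_le (⟪a', c'⟫_ℝ)]
  have hkey : Real.cos (angle a b + angle b c) ≤ ⟪a, c⟫_ℝ := by
    rw [Real.cos_add, hcos1, hcos2, hsin1, hsin2, hdecomp]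
    rw [hna', hnc'] at hCS
    linarith
  have hpos : 0 < Real.cos (angle a b + angle b c) := by
    apply Real.cos_pos_of_mem_Ioo
    constructor
    · have := angle_nonneg a b
      have := angle_nonneg b c
      have : (0:ℝ) < π / 2 := by positivity
      linarith [angle_nonneg a b, angle_nonneg b c]
    · exact h
  linarith

/-- The ε-acute angle condition on a radian ε-net implies the strict coacute
angle condition. -/
theorem stmt15 {n : ℕ} (ε : ℝ) (hε : 0 < ε) (hε' : ε < π / 2)
    (A : Set (EuclideanSpace ℝ (Fin n)))
    (F : EuclideanSpace ℝ (Fin n) → Set (EuclideanSpace ℝ (Fin n)))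
    (hacute : ∀ x ∈ A, ∀ y ∈ F x, 0 < ⟪x, y⟫_ℝ)
    (hnet : ∀ u : EuclideanSpace ℝ (Fin n), ‖u‖ = 1 →
      ∃ u' : EuclideanSpace ℝ (Fin n), ‖u'‖ = 1 ∧ angle u u' < ε ∧ ∃ t : ℝ, 0 < t ∧ t • u' ∈ A)
    (hangle : ∀ x ∈ A, ∀ y ∈ F x, angle x y < π / 2 - ε) :
    ∀ v : EuclideanSpace ℝ (Fin n), v ≠ 0 → ∃ x ∈ A, ∀ y ∈ F x, 0 < ⟪y, v⟫_ℝ := by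
  intro v hv
  have hvn : (0:ℝ) < ‖v‖ := norm_pos_iff.mpr hv
  set u : EuclideanSpace ℝ (Fin n) := ‖v‖⁻¹ • v with hu
  have hun : ‖u‖ = 1 := by
    rw [hu, norm_smul, norm_inv, norm_norm, inv_mul_cancel₀ hvn.ne']
  obtain ⟨u', hu'n, huang, t, ht, htA⟩ := hnet u hun
  refine ⟨t • u', htA, ?_⟩
  intro y hy
  have hyne : y ≠ 0 := by
    intro h0
    have := hacute _ htA y hy
    rw [h0, inner_zero_right] at this
    exact lt_irrefl 0 this
  have hyn : (0:ℝ) < ‖y‖ := norm_pos_iff.mpr hyne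
  set z : EuclideanSpace ℝ (Fin n) := ‖y‖⁻¹ • y with hz
  have hzn : ‖z‖ = 1 := by
    rw [hz, norm_smul, norm_inv, norm_norm, inv_mul_cancel₀ hyn.ne']
  have hang1 : angle z u' = angle (t • u') y := by
    rw [hz, angle_smul_left_of_pos _ _ (inv_pos.mpr hyn),
      angle_smul_left_of_pos u' y ht, angle_comm]
  have hang2 : angle u' u = angle u u' := angle_comm u' u
  have hsum : angle z u' + angle u' u < π / 2 := by
    rw [hang1, hang2]
    have h1 := hangle _ htA y hy
    linarith
  have hpos := aux_angle_sum z u' u hzn hu'n hun hsum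
  have : ⟪z, u⟫_ℝ = ‖y‖⁻¹ * (‖v‖⁻¹ * ⟪y, v⟫_ℝ) := by
    rw [hz, hu, real_inner_smul_left, real_inner_smul_right]
  rw [this] at hpos
  have h1 : (0:ℝ) < ‖y‖⁻¹ := inv_pos.mpr hyn
  have h2 : (0:ℝ) < ‖v‖⁻¹ := inv_pos.mpr hvn
  nlinarith [mul_pos h1 h2]
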